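/- For an n×n matrix ε with complex entries, per(1 + ε) = n! · Σ_{k=0}^n (1/(k!·(n)_k)) · Σ^♯ ε^{⊗k}, where 1 denotes the all-ones matrix, (n)_k = n(n−1)⋯(n−k+1), and Σ^♯ ε^{⊗k} is the sum of products ε_{i₁r₁}⋯ε_{i_k r_k} over all k-tuples of distinct row indices i₁,...,i_k and distinct column indices r₁,...,r_k. -/

import Mathlib

open Finset Equiv

-- card of embeddings with prescribed range
lemma card_fiber_map {n k : ℕ} (S : Finset (Fin n)) (hS : S.card = k) :
    ((Finset.univ : Finset (Fin k ↪ Fin n)).filter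
      (fun e => Finset.univ.map e = S)).card = k.factorial := by
  rw [← Fintype.card_subtype]
  have E : {e : Fin k ↪ Fin n // Finset.univ.map e = S} ≃ (Fin k ↪ {x // x ∈ S}) := by
    refine
      { toFun := fun e => ⟨fun j => ⟨e.1 j, by
          have := Finset.mem_map_of_mem e.1 (Finset.mem_univ j)
          rwa [e.2] at this⟩, ?_⟩
        invFun := fun f => ⟨f.trans (Function.Embedding.subtype _), ?_⟩
        left_inv := ?_, right_inv := ?_ }
    · intro a b h
      exact e.1.injective (congrArg Subtype.val h)
    · apply Finset.eq_of_subset_of_card_le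
      · intro x hx
        simp only [Finset.mem_map, Finset.mem_univ, true_and] at hx
        obtain ⟨j, rfl⟩ := hx
        exact (f j).2
      · simp [hS]
    · intro e; ext j; rfl
    · intro f; ext j; rfl
  rw [Fintype.card_congr E, Fintype.card_embedding_eq]
  simp [Fintype.card_coe, hS, Nat.descFactorial_self]

lemma sum_emb_eq_sum_powersetCard {n k : ℕ} (F : Fin n → ℂ) :
    ∑ e : Fin k ↪ Fin n, ∏ j, F (e j)
      = (k.factorial : ℂ) * ∑ S ∈ Finset.powersetCard k (Finset.univ : Finset (Fin n)),
          ∏ i ∈ S, F i := by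
  have h1 : ∀ e : Fin k ↪ Fin n, ∏ j, F (e j) = ∏ i ∈ Finset.univ.map e, F i := by
    intro e; rw [Finset.prod_map]
  calc ∑ e : Fin k ↪ Fin n, ∏ j, F (e j)
      = ∑ S ∈ Finset.powersetCard k Finset.univ,
          ∑ e ∈ Finset.univ.filter (fun e : Fin k ↪ Fin n => Finset.univ.map e = S),
            ∏ i ∈ S, F i := by
        rw [show (∑ e : Fin k ↪ Fin n, ∏ j, F (e j))
            = ∑ e : Fin k ↪ Fin n, ∏ i ∈ Finset.univ.map e, F i from
          Finset.sum_congr rfl fun e _ => h1 e]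
        rw [← Finset.sum_fiberwise_of_maps_to
          (g := fun e : Fin k ↪ Fin n => Finset.univ.map e)
          (t := Finset.powersetCard k Finset.univ)
          (fun e _ => by simp [Finset.mem_powersetCard])]
        refine Finset.sum_congr rfl fun S _ => Finset.sum_congr rfl fun e he => ?_
        rw [(Finset.mem_filter.mp he).2]
    _ = ∑ S ∈ Finset.powersetCard k Finset.univ, (k.factorial : ℂ) * ∏ i ∈ S, F i := by
        refine Finset.sum_congr rfl fun S hS => ?_
        rw [Finset.sum_const, card_fiber_map S (Finset.mem_powersetCard.mp hS).2,
          nsmul_eq_mul]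
    _ = _ := by rw [Finset.mul_sum]

lemma card_fiber_perm {n k : ℕ} (e r : Fin k ↪ Fin n) :
    ((Finset.univ : Finset (Equiv.Perm (Fin n))).filter
      (fun σ => e.trans σ.toEmbedding = r)).card = (n - k).factorial := by
  classical
  -- a permutation sending e to r
  set E : {x // x ∈ Set.range ⇑e} ≃ {x // x ∈ Set.range ⇑r} :=
    (Equiv.ofInjective _ e.injective).symm.trans (Equiv.ofInjective _ r.injective) with hE
  set σ₀ : Equiv.Perm (Fin n) := E.extendSubtype with hσ₀def
  have hσ₀ : ∀ j, σ₀ (e j) = r j := by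
    intro j
    rw [hσ₀def, Equiv.extendSubtype_apply_of_mem E (e j) ⟨j, rfl⟩]
    have h1 : (⟨e j, ⟨j, rfl⟩⟩ : {x // x ∈ Set.range ⇑e}) = Equiv.ofInjective _ e.injective j :=
      Subtype.ext rfl
    rw [hE, Equiv.trans_apply, h1, Equiv.symm_apply_apply]
    rfl
  -- bijection between the fiber over `r` and the fiber over `e`
  have hcard : ((Finset.univ : Finset (Equiv.Perm (Fin n))).filter
        (fun σ => e.trans σ.toEmbedding = r)).card
      = ((Finset.univ : Finset (Equiv.Perm (Fin n))).filter
        (fun σ => e.trans σ.toEmbedding = e)).card := by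
    refine Finset.card_bij' (fun σ _ => σ₀⁻¹ * σ) (fun σ _ => σ₀ * σ) ?_ ?_ ?_ ?_
    · intro σ hσ
      simp only [Finset.mem_filter, Finset.mem_univ, true_and] at hσ ⊢
      refine DFunLike.ext _ _ fun j => ?_
      have := congrFun (congrArg (fun f : Fin k ↪ Fin n => (f : Fin k → Fin n)) hσ) j
      simp only [Function.Embedding.trans_apply, Equiv.coe_toEmbedding] at this ⊢
      rw [Equiv.Perm.mul_apply, this, ← hσ₀ j, Equiv.Perm.inv_def, Equiv.symm_apply_apply]
    · intro σ hσ
      simp only [Finset.mem_filter, Finset.mem_univ, true_and] at hσ ⊢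
      refine DFunLike.ext _ _ fun j => ?_
      have := congrFun (congrArg (fun f : Fin k ↪ Fin n => (f : Fin k → Fin n)) hσ) j
      simp only [Function.Embedding.trans_apply, Equiv.coe_toEmbedding] at this ⊢
      rw [Equiv.Perm.mul_apply, this, hσ₀ j]
    · intro σ _; group
    · intro σ _; group
  rw [hcard, ← Fintype.card_subtype]
  -- the stabilizer fiber is the permutations of the complement of the range
  have hcond : ∀ f : Equiv.Perm (Fin n),
      (∀ a, ¬(a ∉ Set.range ⇑e) → f a = a) ↔ e.trans f.toEmbedding = e := by
    intro f
    constructor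
    · intro h
      refine DFunLike.ext _ _ fun j => ?_
      simp only [Function.Embedding.trans_apply, Equiv.coe_toEmbedding]
      exact h (e j) (not_not_intro ⟨j, rfl⟩)
    · intro h a ha
      obtain ⟨j, rfl⟩ := not_not.mp ha
      exact congrFun (congrArg (fun f : Fin k ↪ Fin n => (f : Fin k → Fin n)) h) j
  have E2 : Equiv.Perm {x // x ∉ Set.range ⇑e}
      ≃ {σ : Equiv.Perm (Fin n) // e.trans σ.toEmbedding = e} :=
    (Equiv.Perm.subtypeEquivSubtypePerm (fun x => x ∉ Set.range ⇑e)).trans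
      (Equiv.subtypeEquivRight hcond)
  rw [← Fintype.card_congr E2, Fintype.card_perm]
  congr 1
  have : Fintype.card {x // x ∈ Set.range ⇑e} = k := by
    rw [← Fintype.card_congr (Equiv.ofInjective _ e.injective), Fintype.card_fin]
  rw [Fintype.card_subtype_compl, this, Fintype.card_fin]

lemma sum_perm_comp {n k : ℕ} (e : Fin k ↪ Fin n) (G : (Fin k ↪ Fin n) → ℂ) :
    ∑ σ : Equiv.Perm (Fin n), G (e.trans σ.toEmbedding)
      = ((n - k).factorial : ℂ) * ∑ r : Fin k ↪ Fin n, G r := by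
  classical
  rw [← Finset.sum_fiberwise_of_maps_to
    (g := fun σ : Equiv.Perm (Fin n) => e.trans σ.toEmbedding)
    (t := (Finset.univ : Finset (Fin k ↪ Fin n))) (fun σ _ => Finset.mem_univ _),
    Finset.mul_sum]
  refine Finset.sum_congr rfl fun r _ => ?_
  rw [Finset.sum_congr rfl (fun σ hσ => by rw [(Finset.mem_filter.mp hσ).2]),
    Finset.sum_const, card_fiber_perm e r, nsmul_eq_mul]

/-- Permanental expansion: `per(1+ε) = n! Σ_{k=0}^n (1/(k! (n)_k)) Σ^♯ ε^{⊗k}`, where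
`Σ^♯ ε^{⊗k}` sums products over `k`-tuples of distinct rows and distinct columns. -/
theorem permanent_expansion {n : ℕ} (ε : Matrix (Fin n) (Fin n) ℂ) :
    (Matrix.of fun i r => 1 + ε i r).permanent =
      (n.factorial : ℂ) * ∑ k ∈ Finset.range (n + 1),
        (1 / ((k.factorial : ℂ) * (n.descFactorial k : ℂ))) *
          ∑ i : Fin k ↪ Fin n, ∑ r : Fin k ↪ Fin n, ∏ j, ε (i j) (r j) := by
  classical
  rw [Matrix.permanent]
  have expand : ∀ σ : Equiv.Perm (Fin n),
      (∏ i, (Matrix.of fun i r => 1 + ε i r) (σ i) i)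
        = ∑ S ∈ (Finset.univ : Finset (Fin n)).powerset, ∏ i ∈ S, ε (σ i) i := by
    intro σ
    rw [Finset.prod_congr rfl fun i _ => show (Matrix.of fun i r => 1 + ε i r) (σ i) i
        = ε (σ i) i + 1 by simp [Matrix.of_apply, add_comm], Finset.prod_add]
    simp
  rw [Finset.sum_congr rfl fun σ _ => expand σ]
  have split : ∀ σ : Equiv.Perm (Fin n),
      (∑ S ∈ (Finset.univ : Finset (Fin n)).powerset, ∏ i ∈ S, ε (σ i) i)
        = ∑ k ∈ Finset.range (n + 1), ∑ S ∈ Finset.powersetCard k Finset.univ,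
            ∏ i ∈ S, ε (σ i) i := by
    intro σ
    rw [Finset.powerset_card_biUnion, Finset.sum_biUnion
      (fun i _ j _ hij => Finset.univ.pairwise_disjoint_powersetCard hij), Finset.card_fin]
  rw [Finset.sum_congr rfl fun σ _ => split σ, Finset.sum_comm, Finset.mul_sum]
  refine Finset.sum_congr rfl fun k hk => ?_
  have hk' : k ≤ n := Nat.lt_succ_iff.mp (Finset.mem_range.mp hk)
  set T : ℂ := ∑ i : Fin k ↪ Fin n, ∑ r : Fin k ↪ Fin n, ∏ j, ε (i j) (r j) with hT
  set A : ℂ := ∑ σ : Equiv.Perm (Fin n), ∑ S ∈ Finset.powersetCard k Finset.univ,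
      ∏ i ∈ S, ε (σ i) i with hA
  have key : (k.factorial : ℂ) * A = ((n - k).factorial : ℂ) * T := by
    rw [hA, Finset.mul_sum]
    calc (∑ σ : Equiv.Perm (Fin n), (k.factorial : ℂ) *
            ∑ S ∈ Finset.powersetCard k Finset.univ, ∏ i ∈ S, ε (σ i) i)
        = ∑ σ : Equiv.Perm (Fin n), ∑ e : Fin k ↪ Fin n, ∏ j, ε (σ (e j)) (e j) :=
          Finset.sum_congr rfl fun σ _ =>
            (sum_emb_eq_sum_powersetCard (fun i => ε (σ i) i)).symm
      _ = ∑ e : Fin k ↪ Fin n, ∑ σ : Equiv.Perm (Fin n), ∏ j, ε (σ (e j)) (e j) :=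
          Finset.sum_comm
      _ = ∑ e : Fin k ↪ Fin n, ((n - k).factorial : ℂ) *
            ∑ r : Fin k ↪ Fin n, ∏ j, ε (r j) (e j) :=
          Finset.sum_congr rfl fun e _ =>
            sum_perm_comp e (fun r => ∏ j, ε (r j) (e j))
      _ = ((n - k).factorial : ℂ) * ∑ e : Fin k ↪ Fin n, ∑ r : Fin k ↪ Fin n,
            ∏ j, ε (r j) (e j) := (Finset.mul_sum _ _ _).symm
      _ = ((n - k).factorial : ℂ) * T := by rw [hT, Finset.sum_comm]
  have hfact : ((n - k).factorial : ℂ) * (n.descFactorial k : ℂ) = (n.factorial : ℂ) := by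
    exact_mod_cast congrArg (Nat.cast : ℕ → ℂ) (Nat.factorial_mul_descFactorial hk')
  have hk0 : (k.factorial : ℂ) ≠ 0 := Nat.cast_ne_zero.mpr (Nat.factorial_ne_zero k)
  have hd0 : (n.descFactorial k : ℂ) ≠ 0 := Nat.cast_ne_zero.mpr
    (fun h => absurd (Nat.descFactorial_eq_zero_iff_lt.mp h) (not_lt.mpr hk'))
  field_simp
  linear_combination (n.descFactorial k : ℂ) * key + T * hfact
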